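/- Let (Ω, F, P) be a probability space, p > 1, H ∈ (0,1), and let X : [0,∞) × Ω → ℝ be a jointly measurable stochastic process such that ∫₀^T |X_t|^p dt is well defined and finite almost surely for every T > 0. Assume: (i) X is self-similar with index H, i.e. for every c > 0, every n ∈ ℕ and all times t₁, …, t_n ≥ 0, the random vector (X_{c t₁}, …, X_{c t_n}) has the same distribution as (c^H X_{t₁}, …, c^H X_{t_n}); (ii) there exist a constant C > 0 and a nonnegative random variable ξ with P[ξ ≤ y] ≤ C y for all y ≥ 0, such that ∫₀^1 |X_t|^p dt ≥ ξ^p almost surely. Then for every ε ∈ (0, pH), almost surely liminf_{T→∞} T^{−1−ε} ∫₀^T |X_t|^p dt > 0. -/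

import Mathlib

open Set Filter MeasureTheory
open scoped ENNReal NNReal

set_option maxHeartbeats 1000000

lemma integral_exp_neg_eq_tsum {Ω : Type*} [MeasurableSpace Ω] (P : Measure Ω)
    [IsProbabilityMeasure P] (J : Ω → ℝ) (hJ : Measurable J) (l M : ℝ)
    (hl : 0 ≤ l) (hMnn : 0 ≤ M) (h0 : ∀ ω, 0 ≤ J ω) (hM : ∀ ω, J ω ≤ M) :
    ∫ ω, Real.exp (-(l * J ω)) ∂P
      = ∑' k : ℕ, ((-l) ^ k / k.factorial) * ∫ ω, (J ω) ^ k ∂P := by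
  have hexp : ∀ x : ℝ, Real.exp x = ∑' n : ℕ, x ^ n / n.factorial := fun x => by
    rw [Real.exp_eq_exp_ℝ, NormedSpace.exp_eq_tsum_div]
  have hb : ∀ (k : ℕ) (ω : Ω), |(-(l * J ω)) ^ k / k.factorial| ≤ (l * M) ^ k / k.factorial := by
    intro k ω
    rw [abs_div, abs_pow, abs_neg, abs_of_nonneg (mul_nonneg hl (h0 ω)),
      abs_of_nonneg (by positivity : (0:ℝ) ≤ (k.factorial : ℝ))]
    gcongr
    · exact mul_nonneg hl (h0 ω)
    · exact hM ω
  have hmeas : ∀ k : ℕ, AEStronglyMeasurable (fun ω => (-(l * J ω)) ^ k / k.factorial) P := by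
    intro k
    exact (((hJ.const_mul l).neg.pow_const k).div_const _).aestronglyMeasurable
  have hsum : (∑' k : ℕ, ∫⁻ ω, ‖(-(l * J ω)) ^ k / k.factorial‖₊ ∂P) ≠ ⊤ := by
    have h1 : ∀ k : ℕ, (∫⁻ ω, ‖(-(l * J ω)) ^ k / k.factorial‖₊ ∂P)
        ≤ ENNReal.ofReal ((l * M) ^ k / k.factorial) := by
      intro k
      calc (∫⁻ ω, ‖(-(l * J ω)) ^ k / k.factorial‖₊ ∂P)
          ≤ ∫⁻ _, ENNReal.ofReal ((l * M) ^ k / k.factorial) ∂P := by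
            refine lintegral_mono fun ω => ?_
            rw [← enorm_eq_nnnorm, Real.enorm_eq_ofReal_abs]
            exact ENNReal.ofReal_le_ofReal (hb k ω)
        _ = ENNReal.ofReal ((l * M) ^ k / k.factorial) := by simp
    refine ne_of_lt (lt_of_le_of_lt (ENNReal.tsum_le_tsum h1) ?_)
    rw [← ENNReal.ofReal_tsum_of_nonneg (fun k => by positivity)
      (Real.summable_pow_div_factorial _)]
    exact ENNReal.ofReal_lt_top
  calc ∫ ω, Real.exp (-(l * J ω)) ∂P
      = ∫ ω, ∑' k : ℕ, (-(l * J ω)) ^ k / k.factorial ∂P := by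
        refine integral_congr_ae (Eventually.of_forall fun ω => ?_)
        exact hexp _
    _ = ∑' k : ℕ, ∫ ω, (-(l * J ω)) ^ k / k.factorial ∂P :=
        integral_tsum hmeas hsum
    _ = ∑' k : ℕ, ((-l) ^ k / k.factorial) * ∫ ω, (J ω) ^ k ∂P := by
        refine tsum_congr fun k => ?_
        have : ∀ ω, (-(l * J ω)) ^ k / k.factorial
            = ((-l) ^ k / k.factorial) * (J ω) ^ k := by
          intro ω
          rw [show -(l * J ω) = (-l) * J ω by ring, mul_pow]
          ring
        simp_rw [this]
        exact integral_const_mul _ _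

lemma moments_eq {Ω : Type*} [MeasurableSpace Ω] (P : Measure Ω) [IsProbabilityMeasure P]
    (Y Z : ℝ → Ω → ℝ) (hY : Measurable (Function.uncurry Y))
    (hZ : Measurable (Function.uncurry Z))
    (hfdd : ∀ (k : ℕ) (t : Fin k → ℝ), (∀ i, t i ∈ Ioc (0:ℝ) 1) →
      Measure.map (fun ω => fun i => Y (t i) ω) P
        = Measure.map (fun ω => fun i => Z (t i) ω) P)
    (g : ℝ → ℝ) (hg : Measurable g) (M : ℝ) (hg0 : ∀ x, 0 ≤ g x) (hgM : ∀ x, g x ≤ M)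
    (k : ℕ) :
    ∫ ω, (∫ s in Ioc (0:ℝ) 1, g (Y s ω)) ^ k ∂P
      = ∫ ω, (∫ s in Ioc (0:ℝ) 1, g (Z s ω)) ^ k ∂P := by
  have hMnn : 0 ≤ M := le_trans (hg0 0) (hgM 0)
  have key : ∀ W : ℝ → Ω → ℝ, Measurable (Function.uncurry W) →
      ∫ ω, (∫ s in Ioc (0:ℝ) 1, g (W s ω)) ^ k ∂P
        = ∫ x : Fin k → ℝ, (∫ ω, ∏ i, (Ioc (0:ℝ) 1).indicator (fun s => g (W s ω)) (x i) ∂P) := by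
    intro W hW
    have hmW : Measurable fun q : Ω × ℝ => (Ioc (0:ℝ) 1).indicator (fun s => g (W s q.1)) q.2 := by
      have : (fun q : Ω × ℝ => (Ioc (0:ℝ) 1).indicator (fun s => g (W s q.1)) q.2)
          = {q : Ω × ℝ | q.2 ∈ Ioc (0:ℝ) 1}.indicator (fun q => g (W q.2 q.1)) := by
        funext q
        simp only [Set.indicator_apply, Set.mem_setOf_eq]
      rw [this]
      exact Measurable.indicator (hg.comp (hW.comp measurable_swap))
        (measurable_snd measurableSet_Ioc)
    have hGmeas : Measurable fun q : Ω × (Fin k → ℝ) =>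
        ∏ i, (Ioc (0:ℝ) 1).indicator (fun s => g (W s q.1)) (q.2 i) := by
      refine Finset.measurable_prod _ fun i _ => ?_
      exact hmW.comp (measurable_fst.prodMk ((measurable_pi_apply i).comp measurable_snd))
    have hbound : ∀ q : Ω × (Fin k → ℝ),
        (‖∏ i, (Ioc (0:ℝ) 1).indicator (fun s => g (W s q.1)) (q.2 i)‖₊ : ℝ≥0∞)
          ≤ (Set.univ.pi fun _ : Fin k => Ioc (0:ℝ) 1).indicator
              (fun _ => ENNReal.ofReal (M ^ k)) q.2 := by
      intro q
      by_cases hq : q.2 ∈ Set.univ.pi fun _ : Fin k => Ioc (0:ℝ) 1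
      · rw [Set.indicator_of_mem hq, ← enorm_eq_nnnorm, Real.enorm_eq_ofReal_abs]
        refine ENNReal.ofReal_le_ofReal ?_
        rw [Set.mem_pi] at hq
        have hmem : ∀ i, q.2 i ∈ Ioc (0:ℝ) 1 := fun i => hq i (Set.mem_univ i)
        rw [abs_of_nonneg (Finset.prod_nonneg fun i _ => by
          rw [Set.indicator_of_mem (hmem i)]; exact hg0 _)]
        calc (∏ i, (Ioc (0:ℝ) 1).indicator (fun s => g (W s q.1)) (q.2 i))
            ≤ ∏ _i : Fin k, M := by
              refine Finset.prod_le_prod (fun i _ => ?_) (fun i _ => ?_)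
              · rw [Set.indicator_of_mem (hmem i)]; exact hg0 _
              · rw [Set.indicator_of_mem (hmem i)]; exact hgM _
          _ = M ^ k := by simp
      · rw [Set.indicator_of_notMem hq]
        rw [Set.mem_pi] at hq
        push_neg at hq
        obtain ⟨i, -, hi⟩ := hq
        rw [Finset.prod_eq_zero (Finset.mem_univ i) (Set.indicator_of_notMem hi _)]
        simp
    have hInt : Integrable (Function.uncurry fun (ω : Ω) (x : Fin k → ℝ) =>
        ∏ i, (Ioc (0:ℝ) 1).indicator (fun s => g (W s ω)) (x i))
        (P.prod (volume : Measure (Fin k → ℝ))) := by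
      refine ⟨hGmeas.aestronglyMeasurable, ?_⟩
      show (∫⁻ q : Ω × (Fin k → ℝ),
          ‖∏ i, (Ioc (0:ℝ) 1).indicator (fun s => g (W s q.1)) (q.2 i)‖₊
          ∂(P.prod volume)) < ⊤
      calc ∫⁻ q : Ω × (Fin k → ℝ),
            ‖∏ i, (Ioc (0:ℝ) 1).indicator (fun s => g (W s q.1)) (q.2 i)‖₊
            ∂(P.prod volume)
          ≤ ∫⁻ q, (Set.univ.pi fun _ : Fin k => Ioc (0:ℝ) 1).indicator
              (fun _ => ENNReal.ofReal (M ^ k)) q.2 ∂(P.prod volume) :=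
            lintegral_mono hbound
        _ = ∫⁻ (_ : Ω), ∫⁻ x, (Set.univ.pi fun _ : Fin k => Ioc (0:ℝ) 1).indicator
              (fun _ => ENNReal.ofReal (M ^ k)) x ∂volume ∂P := by
            rw [MeasureTheory.lintegral_prod]
            exact ((measurable_const.indicator (MeasurableSet.univ_pi fun _ =>
              measurableSet_Ioc)).comp measurable_snd).aemeasurable
        _ < ⊤ := by
            rw [lintegral_indicator (MeasurableSet.univ_pi fun _ => measurableSet_Ioc)]
            simp only [lintegral_const, Measure.restrict_apply MeasurableSet.univ,
              Set.univ_inter, measure_univ, mul_one, volume_pi_pi]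
            simp only [Real.volume_Ioc, sub_zero, ENNReal.ofReal_one, Finset.prod_const_one,
              mul_one]
            exact ENNReal.ofReal_lt_top
    calc ∫ ω, (∫ s in Ioc (0:ℝ) 1, g (W s ω)) ^ k ∂P
        = ∫ ω, (∫ x : Fin k → ℝ, ∏ i,
            (Ioc (0:ℝ) 1).indicator (fun s => g (W s ω)) (x i)) ∂P := by
          refine integral_congr_ae (Eventually.of_forall fun ω => ?_)
          dsimp only
          rw [← MeasureTheory.integral_indicator measurableSet_Ioc, MeasureTheory.volume_pi,
            MeasureTheory.integral_fintype_prod_eq_pow (ι := Fin k)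
              ((Ioc (0:ℝ) 1).indicator (fun s => g (W s ω))), Fintype.card_fin]
      _ = ∫ x : Fin k → ℝ, (∫ ω, ∏ i,
            (Ioc (0:ℝ) 1).indicator (fun s => g (W s ω)) (x i) ∂P) :=
          integral_integral_swap hInt
  rw [key Y hY, key Z hZ]
  refine integral_congr_ae (Eventually.of_forall fun x => ?_)
  by_cases hxS : ∀ i, x i ∈ Ioc (0:ℝ) 1
  · have hYx : ∀ ω, (∏ i, (Ioc (0:ℝ) 1).indicator (fun s => g (Y s ω)) (x i))
        = ∏ i, g (Y (x i) ω) := fun ω =>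
      Finset.prod_congr rfl fun i _ => Set.indicator_of_mem (hxS i) _
    have hZx : ∀ ω, (∏ i, (Ioc (0:ℝ) 1).indicator (fun s => g (Z s ω)) (x i))
        = ∏ i, g (Z (x i) ω) := fun ω =>
      Finset.prod_congr rfl fun i _ => Set.indicator_of_mem (hxS i) _
    simp_rw [hYx, hZx]
    have hφY : AEMeasurable (fun ω => fun i => Y (x i) ω) P :=
      (measurable_pi_lambda _ fun i => hY.comp measurable_prodMk_left).aemeasurable
    have hφZ : AEMeasurable (fun ω => fun i => Z (x i) ω) P :=
      (measurable_pi_lambda _ fun i => hZ.comp measurable_prodMk_left).aemeasurable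
    have hfm : Measurable fun v : Fin k → ℝ => ∏ i, g (v i) :=
      Finset.measurable_prod _ fun i _ => hg.comp (measurable_pi_apply i)
    calc ∫ ω, ∏ i, g (Y (x i) ω) ∂P
        = ∫ v : Fin k → ℝ, ∏ i, g (v i)
            ∂(Measure.map (fun ω => fun i => Y (x i) ω) P) :=
          (integral_map hφY hfm.aestronglyMeasurable).symm
      _ = ∫ v : Fin k → ℝ, ∏ i, g (v i)
            ∂(Measure.map (fun ω => fun i => Z (x i) ω) P) := by
          rw [hfdd k x hxS]
      _ = ∫ ω, ∏ i, g (Z (x i) ω) ∂P :=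
          integral_map hφZ hfm.aestronglyMeasurable
  · push_neg at hxS
    obtain ⟨i, hi⟩ := hxS
    have h0 : ∀ (W : ℝ → Ω → ℝ) (ω : Ω),
        (∏ j, (Ioc (0:ℝ) 1).indicator (fun s => g (W s ω)) (x j)) = 0 := fun W ω =>
      Finset.prod_eq_zero (Finset.mem_univ i) (Set.indicator_of_notMem hi _)
    simp_rw [h0]

-- basic facts about J_W, reusable
lemma JW_meas {Ω : Type*} [MeasurableSpace Ω] (W : ℝ → Ω → ℝ)
    (hW : Measurable (Function.uncurry W)) (g : ℝ → ℝ) (hg : Measurable g) :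
    Measurable fun ω => ∫ s in Ioc (0:ℝ) 1, g (W s ω) := by
  have : StronglyMeasurable fun q : Ω × ℝ => g (W q.2 q.1) :=
    (hg.comp (hW.comp measurable_swap)).stronglyMeasurable
  exact this.integral_prod_right'.measurable

lemma JW_le {Ω : Type*} [MeasurableSpace Ω] (W : ℝ → Ω → ℝ)
    (hW : Measurable (Function.uncurry W)) (g : ℝ → ℝ) (hg : Measurable g)
    (M : ℝ) (hg0 : ∀ x, 0 ≤ g x) (hgM : ∀ x, g x ≤ M) (ω : Ω) :
    ∫ s in Ioc (0:ℝ) 1, g (W s ω) ≤ M := by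
  have hInt : Integrable (fun s => g (W s ω)) (volume.restrict (Ioc (0:ℝ) 1)) := by
    refine Integrable.mono' (integrable_const M) ?_ ?_
    · exact ((hg.comp (hW.comp measurable_prodMk_right)).aestronglyMeasurable)
    · exact Eventually.of_forall fun s => by
        rw [Real.norm_eq_abs, abs_of_nonneg (hg0 _)]; exact hgM _
  calc ∫ s in Ioc (0:ℝ) 1, g (W s ω) ≤ ∫ _ in Ioc (0:ℝ) 1, M :=
        integral_mono hInt (integrable_const M) fun s => hgM _
    _ = M := by simp [Real.volume_Ioc]

lemma laplace_eq {Ω : Type*} [MeasurableSpace Ω] (P : Measure Ω) [IsProbabilityMeasure P]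
    (Y Z : ℝ → Ω → ℝ) (hY : Measurable (Function.uncurry Y))
    (hZ : Measurable (Function.uncurry Z))
    (hfdd : ∀ (k : ℕ) (t : Fin k → ℝ), (∀ i, t i ∈ Ioc (0:ℝ) 1) →
      Measure.map (fun ω => fun i => Y (t i) ω) P
        = Measure.map (fun ω => fun i => Z (t i) ω) P)
    (g : ℝ → ℝ) (hg : Measurable g) (M : ℝ) (hg0 : ∀ x, 0 ≤ g x) (hgM : ∀ x, g x ≤ M)
    (l : ℝ) (hl : 0 ≤ l) :
    ∫ ω, Real.exp (-(l * ∫ s in Ioc (0:ℝ) 1, g (Y s ω))) ∂P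
      = ∫ ω, Real.exp (-(l * ∫ s in Ioc (0:ℝ) 1, g (Z s ω))) ∂P := by
  have hMnn : 0 ≤ M := le_trans (hg0 0) (hgM 0)
  rw [integral_exp_neg_eq_tsum P _ (JW_meas Y hY g hg) l M hl hMnn
      (fun ω => integral_nonneg fun s => hg0 _) (JW_le Y hY g hg M hg0 hgM),
    integral_exp_neg_eq_tsum P _ (JW_meas Z hZ g hg) l M hl hMnn
      (fun ω => integral_nonneg fun s => hg0 _) (JW_le Z hZ g hg M hg0 hgM)]
  exact tsum_congr fun k => by rw [moments_eq P Y Z hY hZ hfdd g hg M hg0 hgM k]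

lemma tail_bound
    {Ω : Type*} [MeasurableSpace Ω] (P : Measure Ω) [IsProbabilityMeasure P]
    (X : ℝ → Ω → ℝ) (p H : ℝ) (hp : 1 < p) (hH : H ∈ Ioo (0:ℝ) 1)
    (hXmeas : Measurable (Function.uncurry X))
    (hint : ∀ᵐ ω ∂P, ∀ T > (0:ℝ), IntegrableOn (fun t => |X t ω| ^ p) (Ioc 0 T))
    (hss : ∀ c > (0:ℝ), ∀ n : ℕ, ∀ t : Fin n → ℝ, (∀ i, 0 ≤ t i) →
      Measure.map (fun ω => fun i => X (c * t i) ω) P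
        = Measure.map (fun ω => fun i => c ^ H * X (t i) ω) P)
    (C : ℝ) (hC : 0 < C) (ξ : Ω → ℝ) (hξnn : ∀ ω, 0 ≤ ξ ω)
    (hξ : ∀ y : ℝ, 0 ≤ y → P {ω | ξ ω ≤ y} ≤ ENNReal.ofReal (C * y))
    (hdom : ∀ᵐ ω ∂P, ξ ω ^ p ≤ ∫ t in Ioc (0:ℝ) 1, |X t ω| ^ p)
    (ε : ℝ) (hε : ε ∈ Ioo (0:ℝ) (p * H)) (T : ℝ) (hT : 1 ≤ T) :
    P {ω | ∫ t in Ioc (0:ℝ) T, |X t ω| ^ p ≤ T ^ (1 + ε)}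
      ≤ ENNReal.ofReal (Real.exp 1 * (C + 1))
        * ENNReal.ofReal ((T ^ (p * H - ε)) ^ (-(2 * p)⁻¹)) := by
  have hT0 : (0:ℝ) < T := lt_of_lt_of_le one_pos hT
  have hp0 : (0:ℝ) < p := lt_trans one_pos hp
  have habs : Measurable fun x : ℝ => |x| ^ p :=
    ((Real.continuous_rpow_const hp0.le).comp continuous_abs).measurable
  set Y : ℝ → Ω → ℝ := fun s ω => X (T * s) ω with hYdef
  set Z : ℝ → Ω → ℝ := fun s ω => T ^ H * X s ω with hZdef
  have hYm : Measurable (Function.uncurry Y) :=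
    hXmeas.comp ((measurable_fst.const_mul T).prodMk measurable_snd)
  have hZm : Measurable (Function.uncurry Z) :=
    (hXmeas.comp ((measurable_fst).prodMk measurable_snd)).const_mul _
  have hfdd : ∀ (k : ℕ) (t : Fin k → ℝ), (∀ i, t i ∈ Ioc (0:ℝ) 1) →
      Measure.map (fun ω => fun i => Y (t i) ω) P
        = Measure.map (fun ω => fun i => Z (t i) ω) P := by
    intro k t ht
    exact hss T hT0 k t fun i => (ht i).1.le
  -- truncated integrand
  set g : ℕ → ℝ → ℝ := fun m x => min (|x| ^ p) (m : ℝ) with hgdef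
  have hgm : ∀ m, Measurable (g m) := fun m => habs.min measurable_const
  have hg0 : ∀ m x, 0 ≤ g m x := fun m x =>
    le_min (Real.rpow_nonneg (abs_nonneg x) p) (Nat.cast_nonneg m)
  have hgM : ∀ m x, g m x ≤ (m : ℝ) := fun m x => min_le_right _ _
  set JY : ℕ → Ω → ℝ := fun m ω => ∫ s in Ioc (0:ℝ) 1, g m (Y s ω) with hJYdef
  set JZ : ℕ → Ω → ℝ := fun m ω => ∫ s in Ioc (0:ℝ) 1, g m (Z s ω) with hJZdef
  set IZ : Ω → ℝ := fun ω => ∫ s in Ioc (0:ℝ) 1, |Z s ω| ^ p with hIZdef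
  have hJYmeas : ∀ m, Measurable (JY m) := fun m => JW_meas Y hYm (g m) (hgm m)
  have hJZmeas : ∀ m, Measurable (JZ m) := fun m => JW_meas Z hZm (g m) (hgm m)
  have hIZmeas : Measurable IZ := JW_meas Z hZm _ habs
  have hJYnn : ∀ m ω, 0 ≤ JY m ω := fun m ω => integral_nonneg fun s => hg0 m _
  have hJZnn : ∀ m ω, 0 ≤ JZ m ω := fun m ω => integral_nonneg fun s => hg0 m _
  have hIZnn : ∀ ω, 0 ≤ IZ ω := fun ω =>
    integral_nonneg fun s => Real.rpow_nonneg (abs_nonneg _) p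
  set l : ℝ := T ^ (-ε) with hldef
  have hl0 : 0 < l := Real.rpow_pos_of_pos hT0 _
  set A : Set Ω := {ω | ∫ t in Ioc (0:ℝ) T, |X t ω| ^ p ≤ T ^ (1 + ε)} with hAdef
  set B : ℕ → Set Ω := fun m => {ω | JY m ω ≤ T ^ (ε : ℝ)} with hBdef
  -- Step: A ⊆ᵐ B m
  have hAB : ∀ m, A ≤ᵐ[P] B m := by
    intro m
    filter_upwards [hint] with ω hω hA
    have hI : IntegrableOn (fun t => |X t ω| ^ p) (Ioc 0 T) := hω T hT0
    have hII : IntervalIntegrable (fun t => |X t ω| ^ p) volume 0 T :=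
      (intervalIntegrable_iff_integrableOn_Ioc_of_le hT0.le).2 hI
    have hII1 : IntervalIntegrable (fun s => |X (T * s) ω| ^ p) volume 0 1 := by
      have := hII.comp_mul_left (c := T)
      simpa [zero_div, div_self hT0.ne'] using this
    have h1 : IntegrableOn (fun s => |X (T * s) ω| ^ p) (Ioc 0 1) :=
      (intervalIntegrable_iff_integrableOn_Ioc_of_le zero_le_one).1 hII1
    have h2 : JY m ω ≤ ∫ s in Ioc (0:ℝ) 1, |X (T * s) ω| ^ p := by
      refine integral_mono ?_ h1 fun s => min_le_left _ _
      refine Integrable.mono' (integrable_const (m : ℝ)) ?_ ?_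
      · exact ((hgm m).comp ((hYm).comp measurable_prodMk_right)).aestronglyMeasurable
      · exact Eventually.of_forall fun s => by
          rw [Real.norm_eq_abs, abs_of_nonneg (hg0 m _)]; exact hgM m _
    have h3 : ∫ s in Ioc (0:ℝ) 1, |X (T * s) ω| ^ p
        = T⁻¹ * ∫ t in Ioc (0:ℝ) T, |X t ω| ^ p := by
      rw [← intervalIntegral.integral_of_le (zero_le_one (α := ℝ)),
        intervalIntegral.integral_comp_mul_left (fun t => |X t ω| ^ p) hT0.ne',
        mul_zero, mul_one, intervalIntegral.integral_of_le hT0.le, smul_eq_mul]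
    have h4 : T⁻¹ * ∫ t in Ioc (0:ℝ) T, |X t ω| ^ p ≤ T⁻¹ * T ^ (1 + ε) :=
      mul_le_mul_of_nonneg_left hA (inv_nonneg.2 hT0.le)
    have h5 : T⁻¹ * T ^ (1 + ε) = T ^ (ε : ℝ) := by
      rw [← Real.rpow_neg_one T, ← Real.rpow_add hT0]
      ring_nf
    exact le_trans h2 (by rw [h3]; exact h4.trans_eq h5)
  -- Step: P (B m) ≤ ofReal (exp 1 * ∫ exp (-(l * JZ m)))
  have hJYle : ∀ m ω, l * JY m ω ≤ 1 → (1:ℝ) ≤ Real.exp (1 - l * JY m ω) :=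
    fun m ω h => Real.one_le_exp (by linarith)
  have hEint : ∀ m, Integrable (fun ω => Real.exp (1 - l * JY m ω)) P := by
    intro m
    refine Integrable.mono' (integrable_const (Real.exp 1)) ?_ ?_
    · exact (Real.measurable_exp.comp
        (measurable_const.sub ((hJYmeas m).const_mul l))).aestronglyMeasurable
    · refine Eventually.of_forall fun ω => ?_
      rw [Real.norm_eq_abs, abs_of_pos (Real.exp_pos _)]
      exact Real.exp_le_exp.2 (by nlinarith [hJYnn m ω, hl0.le, mul_nonneg hl0.le (hJYnn m ω)])
  have hPB : ∀ m, P (B m) ≤ ENNReal.ofReal (∫ ω, Real.exp (1 - l * JY m ω) ∂P) := by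
    intro m
    have hBmeas : MeasurableSet (B m) := measurableSet_le (hJYmeas m) measurable_const
    calc P (B m) = ∫⁻ ω, (B m).indicator 1 ω ∂P := (lintegral_indicator_one hBmeas).symm
      _ ≤ ∫⁻ ω, ENNReal.ofReal (Real.exp (1 - l * JY m ω)) ∂P := by
          refine lintegral_mono fun ω => ?_
          by_cases hω : ω ∈ B m
          · rw [Set.indicator_of_mem hω]
            refine ENNReal.one_le_ofReal.2 (hJYle m ω ?_)
            have : JY m ω ≤ T ^ (ε : ℝ) := hω
            calc l * JY m ω ≤ l * T ^ (ε : ℝ) :=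
                  mul_le_mul_of_nonneg_left this hl0.le
              _ = 1 := by
                  rw [hldef, ← Real.rpow_add hT0]
                  simp
          · rw [Set.indicator_of_notMem hω]; exact (zero_le : (0:ℝ≥0∞) ≤ _)
      _ = ENNReal.ofReal (∫ ω, Real.exp (1 - l * JY m ω) ∂P) :=
          (ofReal_integral_eq_lintegral_ofReal (hEint m)
            (Eventually.of_forall fun ω => (Real.exp_pos _).le)).symm
  have hEq : ∀ m, ∫ ω, Real.exp (1 - l * JY m ω) ∂P
      = Real.exp 1 * ∫ ω, Real.exp (-(l * JZ m ω)) ∂P := by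
    intro m
    have : ∀ ω, Real.exp (1 - l * JY m ω) = Real.exp 1 * Real.exp (-(l * JY m ω)) := by
      intro ω; rw [← Real.exp_add]; ring_nf
    simp_rw [this]
    rw [integral_const_mul]
    congr 1
    exact laplace_eq P Y Z hYm hZm hfdd (g m) (hgm m) m (hg0 m) (hgM m) l hl0.le
  -- Step: convergence as m → ∞
  have hlim : Tendsto (fun m : ℕ => ∫ ω, Real.exp (-(l * JZ m ω)) ∂P) atTop
      (nhds (∫ ω, Real.exp (-(l * IZ ω)) ∂P)) := by
    refine tendsto_integral_of_dominated_convergence (fun _ => (1:ℝ))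
      (fun m => (Real.measurable_exp.comp
        (((hJZmeas m).const_mul l).neg)).aestronglyMeasurable)
      (integrable_const 1) (fun m => Eventually.of_forall fun ω => ?_) ?_
    · rw [Real.norm_eq_abs, abs_of_pos (Real.exp_pos _), ← Real.exp_zero]
      exact Real.exp_le_exp.2 (by nlinarith [mul_nonneg hl0.le (hJZnn m ω)])
    · filter_upwards [hint] with ω hω
      have h1 : IntegrableOn (fun s => |Z s ω| ^ p) (Ioc 0 1) := by
        have heq : (fun s => |Z s ω| ^ p)
            = fun s => (T ^ H) ^ p * |X s ω| ^ p := by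
          funext s
          rw [hZdef]
          simp only
          rw [abs_mul, abs_of_pos (Real.rpow_pos_of_pos hT0 H),
            Real.mul_rpow (Real.rpow_pos_of_pos hT0 H).le (abs_nonneg _)]
        rw [heq]
        exact (hω 1 one_pos).const_mul _
      have hJtend : Tendsto (fun m : ℕ => JZ m ω) atTop (nhds (IZ ω)) := by
        refine tendsto_integral_of_dominated_convergence (fun s => |Z s ω| ^ p)
          (fun m => ((hgm m).comp ((hZm).comp measurable_prodMk_right)).aestronglyMeasurable)
          h1 (fun m => Eventually.of_forall fun s => ?_)
          (Eventually.of_forall fun s => ?_)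
        · rw [Real.norm_eq_abs, abs_of_nonneg (hg0 m _)]
          exact min_le_left _ _
        · refine tendsto_atTop_of_eventually_const
            (i₀ := ⌈|Z s ω| ^ p⌉₊) fun m hm => ?_
          exact min_eq_left ((Nat.le_ceil _).trans (Nat.cast_le.2 hm))
      exact ((Real.continuous_exp.tendsto _).comp ((hJtend.const_mul l).neg))
  -- Step: P A ≤ ofReal (exp 1 * ∫ exp (-(l * IZ)))
  have hPA : P A ≤ ENNReal.ofReal (Real.exp 1 * ∫ ω, Real.exp (-(l * IZ ω)) ∂P) := by
    refine ge_of_tendsto'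
      ((ENNReal.continuous_ofReal.tendsto _).comp (hlim.const_mul (Real.exp 1))) fun m => ?_
    calc P A ≤ P (B m) := measure_mono_ae (hAB m)
      _ ≤ ENNReal.ofReal (∫ ω, Real.exp (1 - l * JY m ω) ∂P) := hPB m
      _ = ENNReal.ofReal (Real.exp 1 * ∫ ω, Real.exp (-(l * JZ m ω)) ∂P) := by rw [hEq m]
  -- Step: bound the limiting Laplace transform
  set r : ℝ := T ^ (p * H - ε) with hrdef
  have hr0 : (0:ℝ) < r := Real.rpow_pos_of_pos hT0 _
  have hr1 : (1:ℝ) ≤ r := Real.one_le_rpow hT (by simp at hε; linarith [hε.1, hε.2])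
  set y : ℝ := r ^ (-(2 * p)⁻¹) with hydef
  have hy0 : (0:ℝ) < y := Real.rpow_pos_of_pos hr0 _
  have hyp : y ^ p = r ^ (-(2:ℝ)⁻¹) := by
    rw [hydef, ← Real.rpow_mul hr0.le]
    congr 1
    field_simp
  have hlb : l * ((T ^ H) ^ p * y ^ p) = r ^ ((2:ℝ)⁻¹) := by
    rw [hyp, hrdef, hldef, ← Real.rpow_mul hT0.le, ← Real.rpow_mul hT0.le,
      ← Real.rpow_mul hT0.le, ← Real.rpow_add hT0, ← Real.rpow_add hT0]
    congr 1
    ring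
  have hIZeq : ∀ ω, IZ ω = (T ^ H) ^ p * ∫ s in Ioc (0:ℝ) 1, |X s ω| ^ p := by
    intro ω
    rw [hIZdef]
    simp only
    have : ∀ s : ℝ, |Z s ω| ^ p = (T ^ H) ^ p * |X s ω| ^ p := by
      intro s
      rw [hZdef]
      simp only
      rw [abs_mul, abs_of_pos (Real.rpow_pos_of_pos hT0 H),
        Real.mul_rpow (Real.rpow_pos_of_pos hT0 H).le (abs_nonneg _)]
    simp_rw [this]
    exact integral_const_mul _ _
  set B' : Set Ω := {ω | IZ ω ≤ (T ^ H) ^ p * y ^ p} with hB'def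
  have hB'meas : MeasurableSet B' := measurableSet_le hIZmeas measurable_const
  have hptwise : ∀ ω, Real.exp (-(l * IZ ω))
      ≤ B'.indicator (1 : Ω → ℝ) ω + Real.exp (-(r ^ ((2:ℝ)⁻¹))) := by
    intro ω
    by_cases hω : ω ∈ B'
    · rw [Set.indicator_of_mem hω, Pi.one_apply]
      have h1 : Real.exp (-(l * IZ ω)) ≤ 1 := by
        rw [← Real.exp_zero]
        exact Real.exp_le_exp.2 (by nlinarith [mul_nonneg hl0.le (hIZnn ω)])
      linarith [(Real.exp_pos (-(r ^ ((2:ℝ)⁻¹)))).le]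
    · rw [Set.indicator_of_notMem hω]
      have hgt : (T ^ H) ^ p * y ^ p < IZ ω := not_le.1 hω
      have : r ^ ((2:ℝ)⁻¹) ≤ l * IZ ω := by
        rw [← hlb]
        exact mul_le_mul_of_nonneg_left hgt.le hl0.le
      simpa using Real.exp_le_exp.2 (neg_le_neg this)
  have hEIZint : Integrable (fun ω => Real.exp (-(l * IZ ω))) P := by
    refine Integrable.mono' (integrable_const 1) ?_ ?_
    · exact (Real.measurable_exp.comp ((hIZmeas.const_mul l).neg)).aestronglyMeasurable
    · refine Eventually.of_forall fun ω => ?_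
      rw [Real.norm_eq_abs, abs_of_pos (Real.exp_pos _), ← Real.exp_zero]
      exact Real.exp_le_exp.2 (by nlinarith [mul_nonneg hl0.le (hIZnn ω)])
  have hEbound : ∫ ω, Real.exp (-(l * IZ ω)) ∂P ≤ (C + 1) * y := by
    have hIndInt : Integrable (B'.indicator (1 : Ω → ℝ)) P :=
      (integrable_const (1:ℝ)).indicator hB'meas
    have step1 : ∫ ω, Real.exp (-(l * IZ ω)) ∂P
        ≤ ∫ ω, (B'.indicator (1 : Ω → ℝ) ω + Real.exp (-(r ^ ((2:ℝ)⁻¹)))) ∂P :=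
      integral_mono hEIZint (hIndInt.add (integrable_const _)) hptwise
    have step2 : ∫ ω, (B'.indicator (1 : Ω → ℝ) ω + Real.exp (-(r ^ ((2:ℝ)⁻¹)))) ∂P
        = (P B').toReal + Real.exp (-(r ^ ((2:ℝ)⁻¹))) := by
      rw [integral_add hIndInt (integrable_const _), integral_indicator_one hB'meas,
        integral_const]
      simp [Measure.real]
    have step3 : (P B').toReal ≤ C * y := by
      have hsub : B' ≤ᵐ[P] {ω | ξ ω ≤ y} := by
        filter_upwards [hdom] with ω hω hmem
        have h1 : (T ^ H) ^ p * ξ ω ^ p ≤ IZ ω := by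
          rw [hIZeq ω]
          exact mul_le_mul_of_nonneg_left hω (Real.rpow_nonneg
            (Real.rpow_pos_of_pos hT0 H).le p)
        have h2 : (T ^ H) ^ p * ξ ω ^ p ≤ (T ^ H) ^ p * y ^ p := le_trans h1 hmem
        have h3 : ξ ω ^ p ≤ y ^ p :=
          le_of_mul_le_mul_left h2 (Real.rpow_pos_of_pos (Real.rpow_pos_of_pos hT0 H) p)
        by_contra hcon
        exact absurd h3 (not_le.2 (Real.rpow_lt_rpow hy0.le (lt_of_not_ge hcon) hp0))
      have := le_trans (measure_mono_ae hsub) (hξ y hy0.le)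
      exact ENNReal.toReal_le_of_le_ofReal (by positivity) this
    have step4 : Real.exp (-(r ^ ((2:ℝ)⁻¹))) ≤ y := by
      have hu0 : (0:ℝ) < r ^ ((2:ℝ)⁻¹) := Real.rpow_pos_of_pos hr0 _
      have h1 : Real.exp (-(r ^ ((2:ℝ)⁻¹))) ≤ (r ^ ((2:ℝ)⁻¹))⁻¹ := by
        rw [Real.exp_neg]
        refine inv_anti₀ hu0 ?_
        linarith [Real.add_one_le_exp (r ^ ((2:ℝ)⁻¹))]
      have h2 : (r ^ ((2:ℝ)⁻¹))⁻¹ = r ^ (-(2:ℝ)⁻¹) := (Real.rpow_neg hr0.le _).symm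
      have h3 : r ^ (-(2:ℝ)⁻¹) ≤ r ^ (-(2 * p)⁻¹) := by
        refine Real.rpow_le_rpow_of_exponent_le hr1 ?_
        rw [neg_le_neg_iff]
        refine inv_anti₀ (by positivity) (by nlinarith)
      rw [hydef]
      exact h1.trans (h2.le.trans h3)
    calc ∫ ω, Real.exp (-(l * IZ ω)) ∂P
        ≤ (P B').toReal + Real.exp (-(r ^ ((2:ℝ)⁻¹))) := step1.trans_eq step2
      _ ≤ C * y + y := add_le_add step3 step4
      _ = (C + 1) * y := by ring
  -- conclude
  calc P A ≤ ENNReal.ofReal (Real.exp 1 * ∫ ω, Real.exp (-(l * IZ ω)) ∂P) := hPA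
    _ ≤ ENNReal.ofReal (Real.exp 1 * ((C + 1) * y)) := by
        refine ENNReal.ofReal_le_ofReal ?_
        exact mul_le_mul_of_nonneg_left hEbound (Real.exp_pos 1).le
    _ = ENNReal.ofReal (Real.exp 1 * (C + 1)) * ENNReal.ofReal y := by
        rw [← mul_assoc, ENNReal.ofReal_mul (by positivity)]


/-- if `X` is `H`-self-similar and `∫₀^1 |X_t|^p dt ≥ ξ^p` a.s. for a
nonnegative random variable `ξ` with `P[ξ ≤ y] ≤ C y`, then for every `ε ∈ (0, pH)`,
almost surely `liminf_{T→∞} T^{-1-ε} ∫₀^T |X_t|^p dt > 0` (liminf taken in the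
extended reals). -/
theorem stmt_5
    {Ω : Type*} [MeasurableSpace Ω] (P : Measure Ω) [IsProbabilityMeasure P]
    (X : ℝ → Ω → ℝ) (p H : ℝ) (hp : 1 < p) (hH : H ∈ Ioo (0:ℝ) 1)
    (hXmeas : Measurable (Function.uncurry X))
    (hint : ∀ᵐ ω ∂P, ∀ T > (0:ℝ), IntegrableOn (fun t => |X t ω| ^ p) (Ioc 0 T))
    -- (i): self-similarity with index H
    (hss : ∀ c > (0:ℝ), ∀ n : ℕ, ∀ t : Fin n → ℝ, (∀ i, 0 ≤ t i) →
      Measure.map (fun ω => fun i => X (c * t i) ω) P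
        = Measure.map (fun ω => fun i => c ^ H * X (t i) ω) P)
    -- (ii): lower bound by a random variable with a linearly bounded distribution function
    (C : ℝ) (hC : 0 < C) (ξ : Ω → ℝ) (hξnn : ∀ ω, 0 ≤ ξ ω)
    (hξ : ∀ y : ℝ, 0 ≤ y → P {ω | ξ ω ≤ y} ≤ ENNReal.ofReal (C * y))
    (hdom : ∀ᵐ ω ∂P, ξ ω ^ p ≤ ∫ t in Ioc (0:ℝ) 1, |X t ω| ^ p) :
    ∀ ε ∈ Ioo (0:ℝ) (p * H), ∀ᵐ ω ∂P,
      0 < Filter.liminf (fun T : ℝ =>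
        ((T ^ (-1 - ε) * ∫ t in Ioc (0:ℝ) T, |X t ω| ^ p : ℝ) : EReal)) atTop := by
  intro ε hε
  have hp0 : (0:ℝ) < p := lt_trans one_pos hp
  have hε0 : 0 < ε := hε.1
  have hεpH : ε < p * H := hε.2
  -- events
  set s : ℕ → Set Ω := fun n =>
    {ω | ∫ t in Ioc (0:ℝ) ((2:ℝ) ^ n), |X t ω| ^ p ≤ ((2:ℝ) ^ n) ^ (1 + ε)} with hsdef
  set q : ℝ := (p * H - ε) * (-(2 * p)⁻¹) with hqdef
  set ρ : ℝ := (2:ℝ) ^ q with hρdef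
  have hρ0 : 0 ≤ ρ := (Real.rpow_pos_of_pos two_pos q).le
  have hρ1 : ρ < 1 := Real.rpow_lt_one_of_one_lt_of_neg one_lt_two
    (mul_neg_of_pos_of_neg (by linarith) (neg_lt_zero.2 (by positivity)))
  have hTn1 : ∀ n : ℕ, (1:ℝ) ≤ 2 ^ n := fun n => one_le_pow₀ one_le_two
  have hPn : ∀ n : ℕ, P (s n)
      ≤ ENNReal.ofReal (Real.exp 1 * (C + 1)) * ENNReal.ofReal (ρ ^ n) := by
    intro n
    have hb := tail_bound P X p H hp hH hXmeas hint hss C hC ξ hξnn hξ hdom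
      ε ⟨hε0, hεpH⟩ ((2:ℝ) ^ n) (hTn1 n)
    have hexp : (((2:ℝ) ^ n) ^ (p * H - ε)) ^ (-(2 * p)⁻¹) = ρ ^ n := by
      rw [← Real.rpow_natCast (2:ℝ) n, ← Real.rpow_mul (by norm_num : (0:ℝ) ≤ 2),
        ← Real.rpow_mul (by norm_num : (0:ℝ) ≤ 2), hρdef, hqdef,
        ← Real.rpow_natCast ((2:ℝ) ^ ((p * H - ε) * (-(2 * p)⁻¹))) n,
        ← Real.rpow_mul (by norm_num : (0:ℝ) ≤ 2)]
      congr 1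
      ring
    rw [← hexp]
    exact hb
  have hsum : (∑' n : ℕ, P (s n)) ≠ ⊤ := by
    refine ne_of_lt (lt_of_le_of_lt (ENNReal.tsum_le_tsum hPn) ?_)
    rw [ENNReal.tsum_mul_left, ← ENNReal.ofReal_tsum_of_nonneg
      (fun n => pow_nonneg hρ0 n) (summable_geometric_of_lt_one hρ0 hρ1)]
    exact ENNReal.mul_lt_top ENNReal.ofReal_lt_top ENNReal.ofReal_lt_top
  have hBC : ∀ᵐ ω ∂P, ∀ᶠ n : ℕ in atTop, ω ∉ s n := ae_eventually_notMem hsum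
  set c : ℝ := ((2:ℝ) ^ ((1:ℝ) + ε))⁻¹ with hcdef
  have hc0 : 0 < c := inv_pos.2 (Real.rpow_pos_of_pos two_pos _)
  filter_upwards [hint, hBC] with ω hω hev
  obtain ⟨N, hN⟩ := eventually_atTop.1 hev
  have hev2 : ∀ᶠ T : ℝ in atTop,
      (c : EReal) ≤ ((T ^ (-1 - ε) * ∫ t in Ioc (0:ℝ) T, |X t ω| ^ p : ℝ) : EReal) := by
    filter_upwards [eventually_ge_atTop ((2:ℝ) ^ N), eventually_ge_atTop (1:ℝ)]
      with T hTN hT1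
    have hT0 : (0:ℝ) < T := lt_of_lt_of_le one_pos hT1
    set n : ℕ := Nat.log 2 ⌊T⌋₊ with hndef
    have hfl1 : 1 ≤ ⌊T⌋₊ := Nat.le_floor (by exact_mod_cast hT1)
    have hfl0 : ⌊T⌋₊ ≠ 0 := by omega
    have h2nT : ((2:ℝ)) ^ n ≤ T := by
      have h1 : (2:ℕ) ^ n ≤ ⌊T⌋₊ := Nat.pow_log_le_self 2 hfl0
      have h2 : ((2:ℝ) ^ n : ℝ) ≤ (⌊T⌋₊ : ℝ) := by exact_mod_cast h1
      have h3 : (⌊T⌋₊ : ℝ) ≤ T := Nat.floor_le hT0.le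
      push_cast at h2
      linarith
    have hT2n : T < (2:ℝ) ^ (n + 1) := by
      have h1 : ⌊T⌋₊ < 2 ^ (n + 1) := Nat.lt_pow_succ_log_self one_lt_two ⌊T⌋₊
      have h2 : (⌊T⌋₊ : ℝ) + 1 ≤ ((2:ℕ) ^ (n + 1) : ℝ) := by
        exact_mod_cast Nat.succ_le_of_lt h1
      have h3 : T < (⌊T⌋₊ : ℝ) + 1 := Nat.lt_floor_add_one T
      push_cast at h2
      linarith
    have hNn : N ≤ n := by
      have h1 : (2:ℕ) ^ N ≤ ⌊T⌋₊ := Nat.le_floor (by push_cast; exact_mod_cast hTN)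
      exact (Nat.le_log_iff_pow_le one_lt_two hfl0).2 h1
    have hntm : ω ∉ s n := hN n hNn
    have hlow : ((2:ℝ) ^ n) ^ ((1:ℝ) + ε) < ∫ t in Ioc (0:ℝ) ((2:ℝ) ^ n), |X t ω| ^ p := by
      simpa [hsdef, Set.mem_setOf_eq, not_le] using hntm
    have hmono : ∫ t in Ioc (0:ℝ) ((2:ℝ) ^ n), |X t ω| ^ p
        ≤ ∫ t in Ioc (0:ℝ) T, |X t ω| ^ p := by
      refine setIntegral_mono_set (hω T hT0) ?_ ?_
      · exact Eventually.of_forall fun t => Real.rpow_nonneg (abs_nonneg _) p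
      · exact HasSubset.Subset.eventuallyLE (Ioc_subset_Ioc_right h2nT)
    have hdiv : (T / 2) ^ ((1:ℝ) + ε) ≤ ((2:ℝ) ^ n) ^ ((1:ℝ) + ε) := by
      refine Real.rpow_le_rpow (by positivity) ?_ (by linarith)
      rw [div_le_iff₀ two_pos]
      exact le_of_lt (lt_of_lt_of_eq hT2n (by ring))
    have hkey : c ≤ T ^ (-1 - ε) * ∫ t in Ioc (0:ℝ) T, |X t ω| ^ p := by
      have h1 : (T / 2) ^ ((1:ℝ) + ε) ≤ ∫ t in Ioc (0:ℝ) T, |X t ω| ^ p :=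
        le_trans hdiv (le_trans hlow.le hmono)
      have h2 : T ^ (-1 - ε) * (T / 2) ^ ((1:ℝ) + ε)
          ≤ T ^ (-1 - ε) * ∫ t in Ioc (0:ℝ) T, |X t ω| ^ p :=
        mul_le_mul_of_nonneg_left h1 (Real.rpow_nonneg hT0.le _)
      refine le_trans (le_of_eq ?_) h2
      rw [hcdef, Real.div_rpow hT0.le (by norm_num : (0:ℝ) ≤ 2), div_eq_mul_inv,
        ← mul_assoc, ← Real.rpow_add hT0,
        show (-1 - ε + (1 + ε)) = 0 by ring, Real.rpow_zero, one_mul]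
    exact EReal.coe_le_coe_iff.2 hkey
  have hliminf : (c : EReal) ≤ Filter.liminf (fun T : ℝ =>
      ((T ^ (-1 - ε) * ∫ t in Ioc (0:ℝ) T, |X t ω| ^ p : ℝ) : EReal)) atTop :=
    le_liminf_of_le (by isBoundedDefault) hev2
  exact lt_of_lt_of_le (EReal.coe_pos.2 hc0) hliminf
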